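/- Let Λ be a nonempty family of nonnegative Lebesgue-integrable functions on Ω that is inf-stable, and suppose that for every δ > 0 there exists a compact set X_δ ⊆ Ω with |Ω \ X_δ| ≤ δ such that the restriction λ|_{X_δ} is continuous for every λ ∈ Λ. Then the pointwise infimum x ↦ inf_{λ∈Λ} λ(x) is Lebesgue measurable on Ω and inf_{λ∈Λ} ∫_Ω λ(x) dx = ∫_Ω inf_{λ∈Λ} λ(x) dx. -/

import Mathlib

open MeasureTheory Filter Topology Set
open scoped NNReal

private lemma inf_sublevel_measurable
    {d : ℕ} {Λ : Set ((Fin d → ℝ) → ℝ)} (hne : Λ.Nonempty)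
    {Ω X : Set (Fin d → ℝ)} (hXΩ : X ⊆ Ω) (hXm : MeasurableSet X)
    (hpos : ∀ l ∈ Λ, ∀ x ∈ Ω, 0 ≤ l x)
    (hcont : ∀ l ∈ Λ, ContinuousOn l X) (c : ℝ) :
    MeasurableSet {x ∈ X | (⨅ l : Λ, l.1 x) < c} := by
  haveI := hne.to_subtype
  have hb : ∀ x ∈ Ω, BddBelow (Set.range fun l : Λ => l.1 x) := by
    intro x hx
    refine ⟨0, ?_⟩
    rintro _ ⟨l, rfl⟩
    exact hpos l.1 l.2 x hx
  have key : ∀ x ∈ {x ∈ X | (⨅ l : Λ, l.1 x) < c},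
      ∃ V : Set (Fin d → ℝ), IsOpen V ∧ x ∈ V ∧
        ∀ y ∈ V ∩ X, (⨅ l : Λ, l.1 y) < c := by
    rintro x ⟨hxX, hgx⟩
    obtain ⟨l, hl⟩ := exists_lt_of_ciInf_lt hgx
    have hcwa : ContinuousWithinAt l.1 X x := hcont l.1 l.2 x hxX
    have hmem : l.1 ⁻¹' Set.Iio c ∈ 𝓝[X] x := hcwa (Iio_mem_nhds hl)
    rw [mem_nhdsWithin] at hmem
    obtain ⟨V, hVo, hxV, hVsub⟩ := hmem
    refine ⟨V, hVo, hxV, fun y hy => ?_⟩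
    have : l.1 y < c := hVsub ⟨hy.1, hy.2⟩
    exact lt_of_le_of_lt (ciInf_le (hb y (hXΩ hy.2)) l) this
  choose! V hVo hxV hVsub using key
  have heq : {x ∈ X | (⨅ l : Λ, l.1 x) < c}
      = X ∩ ⋃ x ∈ {x ∈ X | (⨅ l : Λ, l.1 x) < c}, V x := by
    ext y
    constructor
    · intro hy
      exact ⟨hy.1, Set.mem_biUnion hy (hxV y hy)⟩
    · rintro ⟨hyX, hyU⟩
      obtain ⟨x, hx, hyV⟩ := Set.mem_iUnion₂.1 hyU
      exact ⟨hyX, hVsub x hx y ⟨hyV, hyX⟩⟩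
  rw [heq]
  exact hXm.inter (isOpen_biUnion fun x hx => hVo x hx).measurableSet

private lemma indicator_inf_measurable
    {d : ℕ} {Λ : Set ((Fin d → ℝ) → ℝ)} (hne : Λ.Nonempty)
    {Ω : Set (Fin d → ℝ)} (X : ℕ → Set (Fin d → ℝ))
    (hXΩ : ∀ n, X n ⊆ Ω) (hXm : ∀ n, MeasurableSet (X n))
    (hpos : ∀ l ∈ Λ, ∀ x ∈ Ω, 0 ≤ l x)
    (hcont : ∀ n, ∀ l ∈ Λ, ContinuousOn l (X n)) :
    Measurable ((⋃ n, X n).indicator (fun x => ⨅ l : Λ, l.1 x)) := by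
  set g : (Fin d → ℝ) → ℝ := fun x => ⨅ l : Λ, l.1 x with hg
  set S := ⋃ n, X n with hS
  have hSm : MeasurableSet S := MeasurableSet.iUnion hXm
  apply measurable_of_Iio
  intro c
  have hcore : MeasurableSet (⋃ n, {x ∈ X n | g x < c}) :=
    MeasurableSet.iUnion fun n =>
        inf_sublevel_measurable hne (hXΩ n) (hXm n) hpos (hcont n) c
  rcases le_or_gt c 0 with hc | hc
  · have : S.indicator g ⁻¹' Set.Iio c = ⋃ n, {x ∈ X n | g x < c} := by
      ext x
      simp only [Set.mem_preimage, Set.mem_Iio, Set.mem_iUnion, Set.mem_setOf_eq]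
      constructor
      · intro hx
        by_cases hxS : x ∈ S
        · obtain ⟨n, hn⟩ := Set.mem_iUnion.1 hxS
          exact ⟨n, hn, by rwa [Set.indicator_of_mem hxS] at hx⟩
        · rw [Set.indicator_of_notMem hxS] at hx
          exact absurd (hx.trans_le hc) (lt_irrefl 0)
      · rintro ⟨n, hxn, hgx⟩
        have hxS : x ∈ S := Set.mem_iUnion.2 ⟨n, hxn⟩
        rwa [Set.indicator_of_mem hxS]
    rw [this]; exact hcore
  · have : S.indicator g ⁻¹' Set.Iio c = (⋃ n, {x ∈ X n | g x < c}) ∪ Sᶜ := by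
      ext x
      simp only [Set.mem_preimage, Set.mem_Iio, Set.mem_union, Set.mem_iUnion,
        Set.mem_setOf_eq, Set.mem_compl_iff]
      constructor
      · intro hx
        by_cases hxS : x ∈ S
        · obtain ⟨n, hn⟩ := Set.mem_iUnion.1 hxS
          exact Or.inl ⟨n, hn, by rwa [Set.indicator_of_mem hxS] at hx⟩
        · exact Or.inr hxS
      · rintro (⟨n, hxn, hgx⟩ | hxS)
        · have hxS : x ∈ S := Set.mem_iUnion.2 ⟨n, hxn⟩
          rwa [Set.indicator_of_mem hxS]
        · rwa [Set.indicator_of_notMem hxS]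
    rw [this]; exact hcore.union hSm.compl

private lemma abs_cont_integral
    {d : ℕ} {Ω : Set (Fin d → ℝ)} (hΩm : MeasurableSet Ω)
    {F : (Fin d → ℝ) → ℝ} (hF : IntegrableOn F Ω)
    (hF0 : ∀ x ∈ Ω, 0 ≤ F x) {ε : ℝ} (hε : 0 < ε) :
    ∃ δ > (0 : ℝ), ∀ S : Set (Fin d → ℝ), MeasurableSet S →
      volume S ≤ ENNReal.ofReal δ → ∫ x in Ω ∩ S, F x ≤ ε := by
  set ν := volume.restrict Ω with hν
  have hlt : ∫⁻ x, ENNReal.ofReal (F x) ∂ν ≠ ⊤ := hF.lintegral_lt_top.ne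
  obtain ⟨δ, hδ0, hδ⟩ := exists_pos_setLIntegral_lt_of_measure_lt hlt
    (ε := ENNReal.ofReal ε) (by simp [hε, hε.le])
  obtain ⟨r, _, hr0, hrδ⟩ := ENNReal.lt_iff_exists_real_btwn.1 hδ0
  refine ⟨r, by exact_mod_cast ENNReal.ofReal_pos.1 hr0, fun S hSm hSr => ?_⟩
  have hνS : ν S < δ := lt_of_le_of_lt (le_trans (Measure.restrict_le_self S) hSr) hrδ
  have hbound := hδ S hνS
  have h0ae : 0 ≤ᶠ[ae (volume.restrict (Ω ∩ S))] F :=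
    ae_restrict_of_forall_mem (hΩm.inter hSm) fun x hx => hF0 x hx.1
  have hFint : IntegrableOn F (Ω ∩ S) := hF.mono_set Set.inter_subset_left
  rw [MeasureTheory.integral_eq_lintegral_of_nonneg_ae h0ae hFint.1]
  have hres : volume.restrict (Ω ∩ S) = ν.restrict S := by
    rw [hν, Measure.restrict_restrict hSm, Set.inter_comm]
  rw [hres]
  calc (∫⁻ x in S, ENNReal.ofReal (F x) ∂ν).toReal
      ≤ (ENNReal.ofReal ε).toReal := ENNReal.toReal_mono (by simp) hbound.le
    _ = ε := ENNReal.toReal_ofReal hε.le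

private lemma usc_majorant
    {d : ℕ} {Λ : Set ((Fin d → ℝ) → ℝ)} (hne : Λ.Nonempty)
    {Ω X : Set (Fin d → ℝ)} (hXΩ : X ⊆ Ω) (hXc : IsCompact X) (hXne : X.Nonempty)
    (hpos : ∀ l ∈ Λ, ∀ x ∈ Ω, 0 ≤ l x)
    (hcont : ∀ l ∈ Λ, ContinuousOn l X)
    {M : ℝ} (hM : ∀ x ∈ X, (⨅ l : Λ, l.1 x) ≤ M)
    {ε : ℝ} (hε : 0 < ε) :
    ∃ ψ : (Fin d → ℝ) → ℝ, Continuous ψ ∧ (∀ x ∈ X, (⨅ l : Λ, l.1 x) ≤ ψ x) ∧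
      (∀ x ∈ X, ψ x ≤ M) ∧
      ∫ x in X, ψ x ≤ (∫ x in X, ⨅ l : Λ, l.1 x) + ε := by
  haveI := hne.to_subtype
  haveI : Nonempty X := hXne.to_subtype
  set g : (Fin d → ℝ) → ℝ := fun x => ⨅ l : Λ, l.1 x with hgdef
  have hb : ∀ x ∈ Ω, BddBelow (Set.range fun l : Λ => l.1 x) := by
    intro x hx
    exact ⟨0, by rintro _ ⟨l, rfl⟩; exact hpos l.1 l.2 x hx⟩
  have hg0 : ∀ x ∈ Ω, 0 ≤ g x := fun x hx =>
    le_ciInf fun l => hpos l.1 l.2 x hx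
  have hgle : ∀ l ∈ Λ, ∀ x ∈ Ω, g x ≤ l x := fun l hl x hx =>
    ciInf_le (hb x hx) ⟨l, hl⟩
  have hM0 : 0 ≤ M := by
    obtain ⟨x₀, hx₀⟩ := hXne
    exact le_trans (hg0 x₀ (hXΩ hx₀)) (hM x₀ hx₀)
  -- the approximating Lipschitz functions
  set ψ : ℕ → (Fin d → ℝ) → ℝ :=
    fun n x => ⨆ y : X, (g y - n * dist x y) with hψdef
  have hbdd : ∀ (n : ℕ) (x : Fin d → ℝ),
      BddAbove (Set.range fun y : X => g y - n * dist x y) := by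
    intro n x
    refine ⟨M, ?_⟩
    rintro _ ⟨y, rfl⟩
    have h1 : g y.1 ≤ M := hM y.1 y.2
    have h2 : (0:ℝ) ≤ (n:ℝ) * dist x y.1 := by positivity
    show g y.1 - n * dist x y.1 ≤ M
    linarith
  have hψge : ∀ (n : ℕ), ∀ x ∈ X, g x ≤ ψ n x := by
    intro n x hx
    have := le_ciSup (hbdd n x) (⟨x, hx⟩ : X)
    simpa using this
  have hψleM : ∀ (n : ℕ) (x : Fin d → ℝ), ψ n x ≤ M := by
    intro n x
    refine ciSup_le fun y => ?_
    have h1 : g y.1 ≤ M := hM y.1 y.2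
    have h2 : (0:ℝ) ≤ (n:ℝ) * dist x y.1 := by positivity
    show g y.1 - n * dist x y.1 ≤ M
    linarith
  have hψcont : ∀ n : ℕ, Continuous (ψ n) := by
    intro n
    have hlip : LipschitzWith (n : ℝ≥0) (ψ n) := by
      rw [lipschitzWith_iff_dist_le_mul]
      intro x x'
      have key : ∀ u v : Fin d → ℝ, ψ n u ≤ ψ n v + n * dist u v := by
        intro u v
        refine ciSup_le fun y => ?_
        have h1 : g y - n * dist u y ≤ (g y - n * dist v y) + n * dist u v := by
          have ht : dist v y.1 ≤ dist v u + dist u y.1 := dist_triangle v u y.1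
          have hn : (0:ℝ) ≤ (n:ℝ) := by positivity
          have hcm : dist v u = dist u v := dist_comm v u
          nlinarith
        exact h1.trans (by
          have := le_ciSup (hbdd n v) y
          linarith)
      have hcast : ((n : ℝ≥0) : ℝ) = (n : ℝ) := by norm_cast
      rw [Real.dist_eq, hcast, abs_sub_le_iff]
      refine ⟨by linarith [key x x'], ?_⟩
      have := key x' x
      rw [dist_comm x' x] at this
      linarith
    exact hlip.continuous
  -- pointwise convergence on X
  have hconv : ∀ x ∈ X, Tendsto (fun n => ψ n x) atTop (𝓝 (g x)) := by
    intro x hx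
    rw [tendsto_order]
    constructor
    · intro b hb
      exact Eventually.of_forall fun n => lt_of_lt_of_le hb (hψge n x hx)
    · intro b hb
      set δ := (b - g x) / 2 with hδdef
      have hδ : 0 < δ := by linarith
      obtain ⟨l, hl⟩ := exists_lt_of_ciInf_lt
        (show (⨅ l : Λ, l.1 x) < g x + δ by simpa [hgdef] using by linarith)
      have hcwa : ContinuousWithinAt l.1 X x := hcont l.1 l.2 x hx
      have hmem : l.1 ⁻¹' Set.Iio (g x + δ) ∈ 𝓝[X] x := hcwa (Iio_mem_nhds hl)
      rw [Metric.mem_nhdsWithin_iff] at hmem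
      obtain ⟨r, hr, hrsub⟩ := hmem
      set N : ℕ := ⌊M / r⌋₊ + 1 with hNdef
      have hNr : M < N * r := by
        have : M / r < (N : ℝ) := by
          rw [hNdef]; push_cast; exact Nat.lt_floor_add_one _
        calc M = (M / r) * r := by field_simp
          _ < N * r := by exact mul_lt_mul_of_pos_right this hr
      filter_upwards [eventually_ge_atTop N] with n hn
      have hψn : ψ n x ≤ g x + δ := by
        refine ciSup_le fun y => ?_
        rcases lt_or_ge (dist y.1 x) r with hcase | hcase
        · have hyb : l.1 y.1 < g x + δ := hrsub ⟨Metric.mem_ball.2 hcase, y.2⟩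
          have : g y.1 ≤ l.1 y.1 := hgle l.1 l.2 y.1 (hXΩ y.2)
          nlinarith [dist_nonneg (x := x) (y := y.1), (by positivity : (0:ℝ) ≤ (n:ℝ))]
        · have h1 : g y.1 ≤ M := hM y.1 y.2
          have h2 : (N : ℝ) * r ≤ n * dist x y.1 := by
            have hn' : (N : ℝ) ≤ n := by exact_mod_cast hn
            have : dist x y.1 = dist y.1 x := dist_comm _ _
            nlinarith [hr.le, (by positivity : (0:ℝ) ≤ (n:ℝ))]
          have := hg0 x (hXΩ hx)
          nlinarith
      linarith [hψn]
  -- dominated convergence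
  have hXm : MeasurableSet X := hXc.measurableSet
  haveI : IsFiniteMeasure (volume.restrict X) :=
    ⟨by rw [Measure.restrict_apply_univ]; exact hXc.measure_lt_top⟩
  have hdom : Tendsto (fun n => ∫ x in X, ψ n x) atTop (𝓝 (∫ x in X, g x)) := by
    refine MeasureTheory.tendsto_integral_of_dominated_convergence (fun _ => M)
      (fun n => (hψcont n).aestronglyMeasurable) (integrable_const M)
      (fun n => ?_) ?_
    · refine ae_restrict_of_forall_mem hXm fun x hx => ?_
      rw [Real.norm_eq_abs, abs_le]
      exact ⟨by linarith [hψge n x hx, hg0 x (hXΩ hx)], hψleM n x⟩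
    · exact ae_restrict_of_forall_mem hXm hconv
  have : ∀ᶠ n in atTop, ∫ x in X, ψ n x < (∫ x in X, g x) + ε :=
    hdom.eventually_lt_const (by linarith)
  obtain ⟨n, hn⟩ := this.exists
  exact ⟨ψ n, hψcont n, fun x hx => hψge n x hx, fun x hx => hψleM n x, hn.le⟩

private lemma inf_aemeasurable
    {d : ℕ} {Λ : Set ((Fin d → ℝ) → ℝ)} (hne : Λ.Nonempty)
    {Ω : Set (Fin d → ℝ)}
    (hpos : ∀ l ∈ Λ, ∀ x ∈ Ω, 0 ≤ l x)
    (hmeasInd : ∀ X : ℕ → Set (Fin d → ℝ), (∀ n, X n ⊆ Ω) → (∀ n, MeasurableSet (X n)) →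
      (∀ n, ∀ l ∈ Λ, ContinuousOn l (X n)) →
      Measurable ((⋃ n, X n).indicator (fun x => ⨅ l : Λ, l.1 x)))
    (hlusin : ∀ δ > (0 : ℝ), ∃ X : Set (Fin d → ℝ),
      IsCompact X ∧ X ⊆ Ω ∧ volume (Ω \ X) ≤ ENNReal.ofReal δ ∧
      ∀ l ∈ Λ, ContinuousOn l X) :
    AEMeasurable (fun x => ⨅ l : Λ, l.1 x) (volume.restrict Ω) := by
  set g : (Fin d → ℝ) → ℝ := fun x => ⨅ l : Λ, l.1 x with hgdef
  choose X hXc hXΩ hXvol hXcont using fun n : ℕ =>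
    hlusin (1 / (n + 1)) (by positivity)
  set S := ⋃ n, X n with hSdef
  have hSm : MeasurableSet S := MeasurableSet.iUnion fun n => (hXc n).measurableSet
  have hnull : volume (Ω \ S) = 0 := by
    refine le_antisymm ?_ zero_le
    refine ENNReal.le_of_forall_pos_le_add fun ε hε _ => ?_
    obtain ⟨n, hn⟩ := exists_nat_one_div_lt (show (0:ℝ) < ε by exact_mod_cast hε)
    calc volume (Ω \ S)
        ≤ volume (Ω \ X n) :=
          measure_mono (Set.diff_subset_diff_right (Set.subset_iUnion X n))
      _ ≤ ENNReal.ofReal (1 / (n + 1)) := hXvol n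
      _ ≤ ENNReal.ofReal ε := ENNReal.ofReal_le_ofReal hn.le
      _ = (ε : ENNReal) := ENNReal.ofReal_coe_nnreal
      _ ≤ 0 + ε := by simp
  have hmeas : Measurable (S.indicator g) :=
    hmeasInd X hXΩ (fun n => (hXc n).measurableSet) hXcont
  refine ⟨S.indicator g, hmeas, ?_⟩
  rw [Filter.EventuallyEq, ae_iff]
  refine measure_mono_null (fun x hx => ?_) (?_ : volume.restrict Ω Sᶜ = 0)
  · simp only [Set.mem_setOf_eq] at hx
    by_contra hxS
    exact hx (by rw [Set.indicator_of_mem (not_not.1 hxS) g])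
  · rw [Measure.restrict_apply hSm.compl]
    rw [Set.inter_comm, ← Set.diff_eq]
    exact hnull
private lemma key_approx
    {d : ℕ} {Λ : Set ((Fin d → ℝ) → ℝ)} (hne : Λ.Nonempty)
    {Ω : Set (Fin d → ℝ)} (hΩo : IsOpen Ω) (hΩb : Bornology.IsBounded Ω)
    (hint : ∀ l ∈ Λ, IntegrableOn l Ω)
    (hpos : ∀ l ∈ Λ, ∀ x ∈ Ω, 0 ≤ l x)
    (hgint : IntegrableOn (fun x => ⨅ l : Λ, l.1 x) Ω)
    (hstable : ∀ N : ℕ, 0 < N →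
      ∀ lam : Fin N → (Fin d → ℝ) → ℝ, (∀ j, lam j ∈ Λ) →
      ∀ φ : Fin N → (Fin d → ℝ) → ℝ,
        (∀ j, ContDiffOn ℝ 1 (φ j) (closure Ω)) →
        (∀ j, ∀ x ∈ closure Ω, φ j x ∈ Set.Icc (0 : ℝ) 1) →
        (∀ x ∈ closure Ω, ∑ j, φ j x = 1) →
        ∃ l ∈ Λ, ∀ x ∈ Ω, l x ≤ ∑ j, φ j x * lam j x)
    (hlusin : ∀ δ > (0 : ℝ), ∃ X : Set (Fin d → ℝ),
      IsCompact X ∧ X ⊆ Ω ∧ volume (Ω \ X) ≤ ENNReal.ofReal δ ∧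
      ∀ l ∈ Λ, ContinuousOn l X)
    {ε : ℝ} (hε : 0 < ε) :
    ∃ l ∈ Λ, ∫ x in Ω, l x ≤ (∫ x in Ω, ⨅ l : Λ, l.1 x) + ε := by
  haveI := hne.to_subtype
  set g : (Fin d → ℝ) → ℝ := fun x => ⨅ l : Λ, l.1 x with hgdef
  have hΩm : MeasurableSet Ω := hΩo.measurableSet
  have hb : ∀ x ∈ Ω, BddBelow (Set.range fun l : Λ => l.1 x) := by
    intro x hx
    exact ⟨0, by rintro _ ⟨l, rfl⟩; exact hpos l.1 l.2 x hx⟩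
  have hg0 : ∀ x ∈ Ω, 0 ≤ g x := fun x hx => le_ciInf fun l => hpos l.1 l.2 x hx
  have hgle : ∀ l ∈ Λ, ∀ x ∈ Ω, g x ≤ l x := fun l hl x hx => ciInf_le (hb x hx) ⟨l, hl⟩
  have hgint0 : 0 ≤ ∫ x in Ω, g x := setIntegral_nonneg hΩm hg0
  obtain ⟨l₀, hl₀⟩ := hne
  set V := (volume Ω).toReal with hVdef
  have hV0 : 0 ≤ V := ENNReal.toReal_nonneg
  set ε' := ε / (3 + 3 * V + 1) with hε'def
  have hD : (0:ℝ) < 3 + 3 * V + 1 := by linarith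
  have hε' : 0 < ε' := div_pos hε hD
  have hsum : (3 + 3 * V + 1) * ε' = ε := by rw [hε'def]; field_simp
  obtain ⟨δ₀, hδ₀, hδ₀spec⟩ := abs_cont_integral hΩm (hint l₀ hl₀) (hpos l₀ hl₀) hε'
  obtain ⟨X, hXc, hXΩ, hXvol, hXcont⟩ := hlusin δ₀ hδ₀
  have hXm : MeasurableSet X := hXc.measurableSet
  have hl₀small : ∫ x in Ω \ X, l₀ x ≤ ε' := by
    have := hδ₀spec (Ω \ X) (hΩm.diff hXm) hXvol
    rwa [Set.inter_eq_self_of_subset_right Set.diff_subset] at this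
  rcases X.eq_empty_or_nonempty with hXe | hXne
  · refine ⟨l₀, hl₀, ?_⟩
    rw [hXe, Set.diff_empty] at hl₀small
    nlinarith
  -- main case : X nonempty
  have hl₀contX : ContinuousOn l₀ X := hXcont l₀ hl₀
  set M := sSup (l₀ '' X) with hMdef
  have hMbdd : BddAbove (l₀ '' X) := hXc.bddAbove_image hl₀contX
  have hMb : ∀ x ∈ X, g x ≤ M := fun x hx =>
    (hgle l₀ hl₀ x (hXΩ hx)).trans (le_csSup hMbdd (Set.mem_image_of_mem _ hx))
  obtain ⟨ψ, hψcont, hψge, hψleM, hψint_le⟩ :=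
    usc_majorant (⟨l₀, hl₀⟩ : Λ.Nonempty) hXΩ hXc hXne hpos hXcont hMb hε'
  have hψ0 : ∀ x ∈ X, 0 ≤ ψ x := fun x hx => (hg0 x (hXΩ hx)).trans (hψge x hx)
  -- covering
  have cov : ∀ x ∈ X, ∃ U : Set (Fin d → ℝ), IsOpen U ∧ x ∈ U ∧
      ∃ l' ∈ Λ, ∀ y ∈ U ∩ X, l' y < ψ y + 3 * ε' := by
    intro x hx
    obtain ⟨lx, hlx⟩ := exists_lt_of_ciInf_lt
      (show (⨅ l : Λ, l.1 x) < g x + ε' by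
        change g x < g x + ε'; linarith)
    have h1 : lx.1 x < ψ x + 2 * ε' := by have := hψge x hx; linarith
    have hA1 : lx.1 ⁻¹' Set.Iio (ψ x + 2 * ε') ∈ 𝓝[X] x :=
      (hXcont lx.1 lx.2 x hx) (Iio_mem_nhds h1)
    have hA2 : {y | ψ x - ε' < ψ y} ∈ 𝓝[X] x := by
      refine mem_nhdsWithin_of_mem_nhds ((isOpen_lt continuous_const hψcont).mem_nhds ?_)
      show ψ x - ε' < ψ x
      linarith
    have hA := Filter.inter_mem hA1 hA2
    rw [mem_nhdsWithin] at hA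
    obtain ⟨U, hUo, hxU, hUsub⟩ := hA
    refine ⟨U, hUo, hxU, lx.1, lx.2, fun y hy => ?_⟩
    obtain ⟨h1', h2'⟩ := hUsub ⟨hy.1, hy.2⟩
    have h1'' : lx.1 y < ψ x + 2 * ε' := h1'
    have h2'' : ψ x - ε' < ψ y := h2'
    linarith
  choose! Ufun hUo hxU lfun hlfunΛ hlfun_bd using cov
  have hcov2 : X ⊆ ⋃ y : X, Ufun y.1 := fun x hx => Set.mem_iUnion.2 ⟨⟨x, hx⟩, hxU x hx⟩
  obtain ⟨t, ht⟩ := hXc.elim_finite_subcover (fun y : X => Ufun y.1)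
    (fun y => hUo y.1 y.2) hcov2
  set N := t.card with hNdef
  set e := t.equivFin with hedef
  set p : Fin N → X := fun j => (e.symm j).1 with hpdef
  set lam' : Fin N → (Fin d → ℝ) → ℝ := fun j => lfun (p j).1 with hlam'def
  have hlam'Λ : ∀ j, lam' j ∈ Λ := fun j => hlfunΛ (p j).1 (p j).2
  have hlam'bd : ∀ j, ∀ y ∈ Ufun (p j).1 ∩ X, lam' j y < ψ y + 3 * ε' :=
    fun j => hlfun_bd (p j).1 (p j).2
  set Φ : (Fin d → ℝ) → ℝ := fun x => ∑ j : Fin N, lam' j x with hΦdef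
  have hΦint : IntegrableOn Φ Ω :=
    integrable_finset_sum _ fun j _ => hint (lam' j) (hlam'Λ j)
  have hΦ0 : ∀ x ∈ Ω, 0 ≤ Φ x := fun x hx =>
    Finset.sum_nonneg fun j _ => hpos _ (hlam'Λ j) x hx
  obtain ⟨δ₁, hδ₁, hδ₁spec⟩ := abs_cont_integral hΩm hΦint hΦ0 hε'
  obtain ⟨W, hXW, hWo, hWvol⟩ := Set.exists_isOpen_lt_add (μ := (volume : Measure (Fin d → ℝ))) X hXc.measure_lt_top.ne
    (ε := ENNReal.ofReal δ₁) (ENNReal.ofReal_pos.2 hδ₁).ne'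
  have hWX : volume (W \ X) ≤ ENNReal.ofReal δ₁ := by
    rw [measure_diff hXW hXm.nullMeasurableSet hXc.measure_lt_top.ne]
    exact tsub_le_iff_right.2 (by rw [add_comm]; exact hWvol.le)
  -- the open cover and the partition of unity
  set C : Fin (N + 1) → Set (Fin d → ℝ) :=
    Fin.cons Xᶜ (fun j => Ufun (p j).1 ∩ W) with hCdef
  have hCo : ∀ i, IsOpen (C i) := by
    intro i
    refine Fin.cases ?_ ?_ i
    · rw [hCdef]
      simpa using hXc.isClosed.isOpen_compl
    · intro j
      rw [hCdef]
      simp only [Fin.cons_succ]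
      exact (hUo (p j).1 (p j).2).inter hWo
  have hCcover : closure Ω ⊆ ⋃ i, C i := by
    intro x _
    by_cases hxX : x ∈ X
    · obtain ⟨y, hyt, hy⟩ := Set.mem_iUnion₂.1 (ht hxX)
      refine Set.mem_iUnion.2 ⟨(e ⟨y, hyt⟩).succ, ?_⟩
      rw [hCdef]
      simp only [Fin.cons_succ]
      have hpe : p (e ⟨y, hyt⟩) = y := by
        rw [hpdef]; simp
      rw [hpe]
      exact ⟨hy, hXW hxX⟩
    · exact Set.mem_iUnion.2 ⟨0, by rw [hCdef]; simpa using hxX⟩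
  obtain ⟨f, hf⟩ := SmoothPartitionOfUnity.exists_isSubordinate
    (I := modelWithCornersSelf ℝ (Fin d → ℝ)) isClosed_closure C hCo hCcover
  set φ : Fin (N + 1) → (Fin d → ℝ) → ℝ := fun i x => f i x with hφdef
  have hφc : ∀ i, Continuous (φ i) := fun i => (f i).contMDiff.continuous
  have hφ0' : ∀ i x, x ∉ C i → φ i x = 0 := fun i x hx =>
    image_eq_zero_of_notMem_tsupport fun h => hx (hf i h)
  set lam : Fin (N + 1) → (Fin d → ℝ) → ℝ := Fin.cons l₀ lam' with hlamdef
  have hlamΛ : ∀ i, lam i ∈ Λ := by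
    intro i
    refine Fin.cases ?_ ?_ i
    · rw [hlamdef]; simpa using hl₀
    · intro j; rw [hlamdef]; simpa using hlam'Λ j
  obtain ⟨l, hlΛ, hlle⟩ := hstable (N + 1) N.succ_pos lam hlamΛ φ
    (fun i => ((contMDiff_iff_contDiff.1 (f i).contMDiff).of_le
      (by exact_mod_cast le_top)).contDiffOn)
    (fun i x _ => ⟨f.nonneg i x, f.le_one i x⟩)
    (fun x hx => by rw [← finsum_eq_sum_of_fintype]; exact f.sum_eq_one hx)
  refine ⟨l, hlΛ, ?_⟩
  set F : (Fin d → ℝ) → ℝ := fun x => ∑ i, φ i x * lam i x with hFdef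
  have hFint : IntegrableOn F Ω := integrable_finset_sum _ fun i _ =>
    Integrable.bdd_mul (hint (lam i) (hlamΛ i)) (hφc i).aestronglyMeasurable
      (c := 1) (ae_of_all _ fun x => by
        rw [Real.norm_eq_abs, abs_of_nonneg (f.nonneg i x)]
        exact f.le_one i x)
  have step0 : ∫ x in Ω, l x ≤ ∫ x in Ω, F x :=
    setIntegral_mono_on (hint l hlΛ) hFint hΩm hlle
  have hsplit : ∫ x in Ω, F x = (∫ x in Ω \ X, F x) + ∫ x in X, F x := by
    have := setIntegral_union (f := F) (μ := volume) disjoint_sdiff_self_left hXm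
      (hFint.mono_set Set.diff_subset) (hFint.mono_set hXΩ)
    rwa [Set.diff_union_of_subset hXΩ] at this
  -- estimate on Ω \ X
  have hpt1 : ∀ x ∈ Ω \ X, F x ≤ l₀ x + W.indicator Φ x := by
    intro x hx
    have h0 : φ 0 x * lam 0 x ≤ l₀ x := by
      rw [hlamdef]
      simp only [Fin.cons_zero]
      exact mul_le_of_le_one_left (hpos l₀ hl₀ x hx.1) (f.le_one 0 x)
    have hterm : ∀ j : Fin N, φ j.succ x * lam j.succ x ≤ W.indicator (lam' j) x := by
      intro j
      by_cases hxW : x ∈ W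
      · rw [Set.indicator_of_mem hxW, hlamdef]
        simp only [Fin.cons_succ]
        exact mul_le_of_le_one_left (hpos _ (hlam'Λ j) x hx.1) (f.le_one _ x)
      · have hz : φ j.succ x = 0 := hφ0' j.succ x (by
          rw [hCdef]
          simp only [Fin.cons_succ]
          exact fun hmem => hxW hmem.2)
        simp [hz, Set.indicator_of_notMem hxW]
    have hsumle : ∑ j : Fin N, φ j.succ x * lam j.succ x ≤ W.indicator Φ x := by
      calc ∑ j : Fin N, φ j.succ x * lam j.succ x
          ≤ ∑ j : Fin N, W.indicator (lam' j) x := Finset.sum_le_sum fun j _ => hterm j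
        _ = W.indicator Φ x := by
            by_cases hxW : x ∈ W
            · simp [Set.indicator_of_mem hxW, hΦdef]
            · simp [Set.indicator_of_notMem hxW]
    calc F x = φ 0 x * lam 0 x + ∑ j : Fin N, φ j.succ x * lam j.succ x :=
          Fin.sum_univ_succ _
      _ ≤ l₀ x + W.indicator Φ x := add_le_add h0 hsumle
  have hInd_int : IntegrableOn (fun x => l₀ x + W.indicator Φ x) (Ω \ X) :=
    ((hint l₀ hl₀).mono_set Set.diff_subset).add
      ((hΦint.mono_set Set.diff_subset).indicator hWo.measurableSet)
  have est1 : ∫ x in Ω \ X, F x ≤ ε' + ε' := by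
    have h1 : ∫ x in Ω \ X, F x ≤ ∫ x in Ω \ X, (l₀ x + W.indicator Φ x) :=
      setIntegral_mono_on (hFint.mono_set Set.diff_subset) hInd_int (hΩm.diff hXm) hpt1
    have h2 : ∫ x in Ω \ X, (l₀ x + W.indicator Φ x)
        = (∫ x in Ω \ X, l₀ x) + ∫ x in Ω \ X, W.indicator Φ x :=
      integral_add ((hint l₀ hl₀).mono_set Set.diff_subset)
        ((hΦint.mono_set Set.diff_subset).indicator hWo.measurableSet)
    have h3 : ∫ x in Ω \ X, W.indicator Φ x = ∫ x in (Ω \ X) ∩ W, Φ x := by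
      rw [MeasureTheory.integral_indicator hWo.measurableSet,
        Measure.restrict_restrict hWo.measurableSet, Set.inter_comm]
    have h4 : ∫ x in (Ω \ X) ∩ W, Φ x ≤ ε' := by
      have heq : (Ω \ X) ∩ W = Ω ∩ (W \ X) := by
        ext y
        simp only [Set.mem_inter_iff, Set.mem_diff]
        tauto
      rw [heq]
      exact hδ₁spec (W \ X) (hWo.measurableSet.diff hXm) hWX
    linarith
  -- estimate on X
  have hpt2 : ∀ x ∈ X, F x ≤ ψ x + 3 * ε' := by
    intro x hx
    have hφ00 : φ 0 x = 0 := hφ0' 0 x (by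
      rw [hCdef]
      simpa using hx)
    have hxΩ' : x ∈ closure Ω := subset_closure (hXΩ hx)
    have hsum1 : ∑ i, φ i x = 1 := by
      rw [← finsum_eq_sum_of_fintype]; exact f.sum_eq_one hxΩ'
    rw [Fin.sum_univ_succ] at hsum1
    rw [hφ00, zero_add] at hsum1
    have hterm : ∀ j : Fin N, φ j.succ x * lam j.succ x ≤ φ j.succ x * (ψ x + 3 * ε') := by
      intro j
      by_cases hφj : φ j.succ x = 0
      · rw [hφj, zero_mul, zero_mul]
      · have hxC : x ∈ C j.succ := by
          by_contra hxC
          exact hφj (hφ0' _ _ hxC)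
        rw [hCdef] at hxC
        simp only [Fin.cons_succ] at hxC
        have hlt : lam' j x < ψ x + 3 * ε' := hlam'bd j x ⟨hxC.1, hx⟩
        have hle : lam j.succ x ≤ ψ x + 3 * ε' := by
          rw [hlamdef]
          simp only [Fin.cons_succ]
          linarith
        exact mul_le_mul_of_nonneg_left hle (f.nonneg _ x)
    calc F x = φ 0 x * lam 0 x + ∑ j : Fin N, φ j.succ x * lam j.succ x :=
          Fin.sum_univ_succ _
      _ = ∑ j : Fin N, φ j.succ x * lam j.succ x := by rw [hφ00, zero_mul, zero_add]
      _ ≤ ∑ j : Fin N, φ j.succ x * (ψ x + 3 * ε') := Finset.sum_le_sum fun j _ => hterm j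
      _ = (∑ j : Fin N, φ j.succ x) * (ψ x + 3 * ε') := by rw [← Finset.sum_mul]
      _ = ψ x + 3 * ε' := by rw [hsum1, one_mul]
  have hψintX : IntegrableOn ψ X := hψcont.continuousOn.integrableOn_compact hXc
  have hψintX' : IntegrableOn (fun x => ψ x + 3 * ε') X :=
    hψintX.add (integrableOn_const hXc.measure_lt_top.ne)
  have est2 : ∫ x in X, F x ≤ (∫ x in X, ψ x) + (volume X).toReal * (3 * ε') := by
    have h1 : ∫ x in X, F x ≤ ∫ x in X, (ψ x + 3 * ε') :=
      setIntegral_mono_on (hFint.mono_set hXΩ) hψintX' hXm hpt2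
    have h2 : ∫ x in X, (ψ x + 3 * ε')
        = (∫ x in X, ψ x) + ∫ x in X, (3 * ε' : ℝ) :=
      integral_add hψintX (integrableOn_const hXc.measure_lt_top.ne)
    have h3 : ∫ x in X, (3 * ε' : ℝ) = (volume X).toReal * (3 * ε') := by
      rw [setIntegral_const, smul_eq_mul, measureReal_def]
    linarith
  have hVX : (volume X).toReal ≤ V := ENNReal.toReal_mono hΩb.measure_lt_top.ne
    (measure_mono hXΩ)
  have est4 : ∫ x in X, g x ≤ ∫ x in Ω, g x := by
    refine setIntegral_mono_set hgint ?_ (HasSubset.Subset.eventuallyLE hXΩ)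
    filter_upwards [ae_restrict_of_forall_mem hΩm hg0] with x hx using hx
  have hprod : (volume X).toReal * (3 * ε') ≤ V * (3 * ε') :=
    mul_le_mul_of_nonneg_right hVX (by positivity)
  calc ∫ x in Ω, l x ≤ ∫ x in Ω, F x := step0
    _ = (∫ x in Ω \ X, F x) + ∫ x in X, F x := hsplit
    _ ≤ (ε' + ε') + ((∫ x in X, ψ x) + (volume X).toReal * (3 * ε')) :=
        add_le_add est1 est2
    _ ≤ (∫ x in Ω, g x) + ε := by nlinarith [hψint_le, est4, hprod, hsum, hε'.le]

/-- **Commutation of infimum and integral for inf-stable families** (Lemma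
`lemma commutativita`): if `Λ` is an inf-stable family of nonnegative integrable
functions on `Ω` which are simultaneously continuous outside sets of arbitrarily
small measure, then `inf_{λ∈Λ} ∫_Ω λ = ∫_Ω inf_{λ∈Λ} λ`. -/
theorem statement12
    (d : ℕ) (hd : 0 < d)
    (Ω : Set (Fin d → ℝ)) (hΩo : IsOpen Ω) (hΩb : Bornology.IsBounded Ω)
    (Λ : Set ((Fin d → ℝ) → ℝ)) (hne : Λ.Nonempty)
    (hint : ∀ l ∈ Λ, IntegrableOn l Ω)
    (hpos : ∀ l ∈ Λ, ∀ x ∈ Ω, 0 ≤ l x)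
    (hstable : ∀ N : ℕ, 0 < N →
      ∀ lam : Fin N → (Fin d → ℝ) → ℝ, (∀ j, lam j ∈ Λ) →
      ∀ φ : Fin N → (Fin d → ℝ) → ℝ,
        (∀ j, ContDiffOn ℝ 1 (φ j) (closure Ω)) →
        (∀ j, ∀ x ∈ closure Ω, φ j x ∈ Set.Icc (0 : ℝ) 1) →
        (∀ x ∈ closure Ω, ∑ j, φ j x = 1) →
        ∃ l ∈ Λ, ∀ x ∈ Ω, l x ≤ ∑ j, φ j x * lam j x)
    (hlusin : ∀ δ > (0 : ℝ), ∃ X : Set (Fin d → ℝ),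
      IsCompact X ∧ X ⊆ Ω ∧ volume (Ω \ X) ≤ ENNReal.ofReal δ ∧
      ∀ l ∈ Λ, ContinuousOn l X) :
    AEMeasurable (fun x => ⨅ l : Λ, l.1 x) (volume.restrict Ω) ∧
    (⨅ l : Λ, ∫ x in Ω, l.1 x) = ∫ x in Ω, ⨅ l : Λ, l.1 x := by
  haveI := hne.to_subtype
  have hΩm : MeasurableSet Ω := hΩo.measurableSet
  have hb : ∀ x ∈ Ω, BddBelow (Set.range fun l : Λ => l.1 x) := by
    intro x hx
    exact ⟨0, by rintro _ ⟨l, rfl⟩; exact hpos l.1 l.2 x hx⟩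
  have hg0 : ∀ x ∈ Ω, 0 ≤ ⨅ l : Λ, l.1 x := fun x hx =>
    le_ciInf fun l => hpos l.1 l.2 x hx
  have hgle : ∀ l ∈ Λ, ∀ x ∈ Ω, (⨅ l : Λ, l.1 x) ≤ l x := fun l hl x hx =>
    ciInf_le (hb x hx) ⟨l, hl⟩
  have haemeas : AEMeasurable (fun x => ⨅ l : Λ, l.1 x) (volume.restrict Ω) :=
    inf_aemeasurable hne hpos
      (fun X hXΩ hXm hcont => indicator_inf_measurable hne X hXΩ hXm hpos hcont) hlusin
  obtain ⟨l₀, hl₀⟩ := hne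
  have hgint : IntegrableOn (fun x => ⨅ l : Λ, l.1 x) Ω := by
    refine Integrable.mono' (hint l₀ hl₀) haemeas.aestronglyMeasurable ?_
    filter_upwards [ae_restrict_of_forall_mem hΩm
      (fun x hx => ⟨hg0 x hx, hgle l₀ hl₀ x hx⟩ :
        ∀ x ∈ Ω, 0 ≤ (⨅ l : Λ, l.1 x) ∧ (⨅ l : Λ, l.1 x) ≤ l₀ x)] with x hx
    rw [Real.norm_eq_abs, abs_of_nonneg hx.1]
    exact hx.2
  refine ⟨haemeas, ?_⟩
  have hIb : BddBelow (Set.range fun l : Λ => ∫ x in Ω, l.1 x) := by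
    refine ⟨0, ?_⟩
    rintro _ ⟨l, rfl⟩
    exact setIntegral_nonneg hΩm (hpos l.1 l.2)
  refine le_antisymm ?_ ?_
  · refine le_of_forall_pos_le_add fun ε hε => ?_
    obtain ⟨l, hlΛ, hl⟩ := key_approx ⟨l₀, hl₀⟩ hΩo hΩb hint hpos hgint hstable hlusin hε
    exact le_trans (ciInf_le hIb ⟨l, hlΛ⟩) hl
  · exact le_ciInf fun l =>
      setIntegral_mono_on hgint (hint l.1 l.2) hΩm fun x hx => hgle l.1 l.2 x hx
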